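/- In the two-type mean-field model with competition (a_{1,1} > a_{2,1} and a_{2,2} > a_{1,2}), the system is bistable: h(u) < 0 for u in (0, u*) and h(u) > 0 for u in (u*, 1), so solutions of du/dt = h(u) converge to 0 when u(0) < u* and to 1 when u(0) > u*. -/

import Mathlib

open Set Filter

noncomputable def twoTypeH (a11 a12 a21 a22 : ℝ) (u : ℝ) : ℝ :=
  (a12 / (a12 * u + a22 * (1 - u)) - a21 / (a11 * u + a21 * (1 - u))) * u * (1 - u)

/-- Convergence to the left endpoint for a scalar autonomous ODE whose field is
negative on `(a,b)` and bounded below by `-C (u - a)` on `[a,b]`. -/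
lemma ode_conv (f : ℝ → ℝ) (a b : ℝ)
    (hcont : ContinuousOn f (Set.Icc a b))
    (hneg : ∀ u ∈ Set.Ioo a b, f u < 0)
    (hlin : ∃ C, ∀ u ∈ Set.Icc a b, -(C * (u - a)) ≤ f u)
    (y : ℝ → ℝ) (hy : ∀ t, 0 ≤ t → HasDerivAt y (f (y t)) t)
    (hy0 : y 0 ∈ Set.Ioo a b) :
    Filter.Tendsto y Filter.atTop (nhds a) := by
  obtain ⟨C0, hC0⟩ := hlin
  set C := max C0 1 with hCdef
  have hC : (0:ℝ) < C := lt_of_lt_of_le one_pos (le_max_right _ _)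
  have hlin' : ∀ u ∈ Set.Icc a b, -(C * (u - a)) ≤ f u := by
    intro u hu
    refine le_trans ?_ (hC0 u hu)
    have h1 : C0 * (u - a) ≤ C * (u - a) :=
      mul_le_mul_of_nonneg_right (le_max_left _ _) (by linarith [hu.1])
    linarith
  have hab : a < b := lt_trans hy0.1 hy0.2
  have hycont : ContinuousOn y (Set.Ici 0) := fun t ht =>
    ((hy t ht).continuousAt).continuousWithinAt
  obtain ⟨b', hb'1, hb'2⟩ := exists_between hy0.2
  -- forward invariance of (a, b')
  have key : ∀ t : ℝ, 0 ≤ t → y t ∈ Set.Ioo a b' := by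
    by_contra hbad
    push_neg at hbad
    obtain ⟨t1, ht1, hyt1⟩ := hbad
    set Bad : Set ℝ := Set.Ici 0 ∩ y ⁻¹' (Set.Ioo a b')ᶜ with hBadDef
    have hBadmem : ∀ t, t ∈ Bad ↔ (0 ≤ t ∧ y t ∉ Set.Ioo a b') := by
      intro t; simp [hBadDef]
    have hBadne : Bad.Nonempty := ⟨t1, (hBadmem t1).mpr ⟨ht1, hyt1⟩⟩
    have hBadbdd : BddBelow Bad := ⟨0, fun t ht => ((hBadmem t).mp ht).1⟩
    have hBadclosed : IsClosed Bad :=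
      hycont.preimage_isClosed_of_isClosed isClosed_Ici (isOpen_Ioo.isClosed_compl)
    set t0 := sInf Bad with ht0def
    have ht0mem : t0 ∈ Bad := hBadclosed.csInf_mem hBadne hBadbdd
    obtain ⟨ht0nn, ht0bad⟩ := (hBadmem t0).mp ht0mem
    have h0good : (0:ℝ) ∉ Bad := by
      rw [hBadmem]; push_neg; intro _; exact ⟨hy0.1, hb'1⟩
    have ht0pos : 0 < t0 := lt_of_le_of_ne ht0nn (fun h => h0good (h ▸ ht0mem))
    have before : ∀ s, 0 ≤ s → s < t0 → y s ∈ Set.Ioo a b' := by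
      intro s hs hst
      by_contra hc
      exact absurd (csInf_le hBadbdd ((hBadmem s).mpr ⟨hs, hc⟩)) (not_le.mpr hst)
    -- y is antitone on [0, t0]
    have hanti : AntitoneOn y (Set.Icc 0 t0) := by
      apply antitoneOn_of_deriv_nonpos (convex_Icc 0 t0)
        (hycont.mono (fun s hs => hs.1))
      · intro s hs
        rw [interior_Icc] at hs
        exact ((hy s hs.1.le).differentiableAt).differentiableWithinAt
      · intro s hs
        rw [interior_Icc] at hs
        rw [(hy s hs.1.le).deriv]
        have hys := before s hs.1.le hs.2
        exact (hneg _ ⟨hys.1, lt_trans hys.2 hb'2⟩).le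
    have hyt0_le : y t0 ≤ y 0 :=
      hanti (Set.left_mem_Icc.mpr ht0nn) (Set.right_mem_Icc.mpr ht0nn) ht0nn
    have hyt0a : y t0 ≤ a := by
      rw [Set.mem_Ioo] at ht0bad
      rcases not_and_or.mp ht0bad with h | h
      · exact not_lt.mp h
      · exact absurd (lt_of_le_of_lt hyt0_le hb'1) h
    -- Gronwall: φ s = (y s - a) exp (C s) is monotone on [0, t0]
    set φ : ℝ → ℝ := fun s => (y s - a) * Real.exp (C * s) with hφdef
    have hφderiv : ∀ s, 0 ≤ s → s ≤ t0 → HasDerivAt φ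
        (f (y s) * Real.exp (C * s) + (y s - a) * (Real.exp (C * s) * C)) s := by
      intro s hs _
      have h1 : HasDerivAt (fun s : ℝ => C * s) C s := by
        simpa using (hasDerivAt_id s).const_mul C
      exact ((hy s hs).sub_const a).mul h1.exp
    have hφmono : MonotoneOn φ (Set.Icc 0 t0) := by
      apply monotoneOn_of_deriv_nonneg (convex_Icc 0 t0)
      · intro s hs
        exact ((hφderiv s hs.1 hs.2).continuousAt).continuousWithinAt
      · intro s hs
        rw [interior_Icc] at hs
        exact ((hφderiv s hs.1.le hs.2.le).differentiableAt).differentiableWithinAt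
      · intro s hs
        rw [interior_Icc] at hs
        rw [(hφderiv s hs.1.le hs.2.le).deriv]
        have hys := before s hs.1.le hs.2
        have hmem : y s ∈ Set.Icc a b := ⟨hys.1.le, (lt_trans hys.2 hb'2).le⟩
        have := hlin' (y s) hmem
        have hexp : (0:ℝ) < Real.exp (C * s) := Real.exp_pos _
        nlinarith [Real.exp_pos (C * s)]
    have hineq : φ 0 ≤ φ t0 :=
      hφmono (Set.left_mem_Icc.mpr ht0nn) (Set.right_mem_Icc.mpr ht0nn) ht0nn
    have hφ0 : 0 < φ 0 := by
      simp only [hφdef, mul_zero, Real.exp_zero, mul_one]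
      linarith [hy0.1]
    have hφt0 : φ t0 ≤ 0 := by
      apply mul_nonpos_of_nonpos_of_nonneg
      · linarith
      · exact (Real.exp_pos _).le
    linarith
  -- y is antitone on [0, ∞)
  have hanti : AntitoneOn y (Set.Ici 0) := by
    apply antitoneOn_of_deriv_nonpos (convex_Ici 0) hycont
    · intro s hs
      rw [interior_Ici] at hs
      exact ((hy s hs.le).differentiableAt).differentiableWithinAt
    · intro s hs
      rw [interior_Ici] at hs
      rw [(hy s hs.le).deriv]
      have hys := key s hs.le
      exact (hneg _ ⟨hys.1, lt_trans hys.2 hb'2⟩).le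
  set z : ℝ → ℝ := fun t => y (max t 0) with hzdef
  have hzanti : Antitone z := by
    intro s t hst
    exact hanti (le_max_right s 0) (le_max_right t 0) (max_le_max hst le_rfl)
  have hzbdd : BddBelow (Set.range z) := by
    refine ⟨a, ?_⟩
    rintro x ⟨t, rfl⟩
    exact (key _ (le_max_right t 0)).1.le
  have htendz : Tendsto z atTop (nhds (⨅ t, z t)) := tendsto_atTop_ciInf hzanti hzbdd
  set L := ⨅ t, z t with hLdef
  have hz0 : z 0 = y 0 := by simp [hzdef]
  have haL : a ≤ L := le_ciInf (fun t => (key _ (le_max_right t 0)).1.le)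
  have hLb : L < b := lt_of_le_of_lt (hz0 ▸ ciInf_le hzbdd 0) hy0.2
  have hLle : ∀ t, 0 ≤ t → L ≤ y t := by
    intro t ht
    have := ciInf_le hzbdd t
    rwa [show z t = y t by simp [hzdef, max_eq_left ht]] at this
  have htendy : Tendsto y atTop (nhds L) := by
    apply htendz.congr'
    filter_upwards [eventually_ge_atTop (0:ℝ)] with t ht
    simp [hzdef, max_eq_left ht]
  have hLa : L = a := by
    by_contra hne
    have haL' : a < L := lt_of_le_of_ne haL (Ne.symm hne)
    have hfL : f L < 0 := hneg L ⟨haL', hLb⟩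
    have hcontL : ContinuousAt f L := hcont.continuousAt (Icc_mem_nhds haL' hLb)
    have hev : f ⁻¹' Set.Iio (f L / 2) ∈ nhds L :=
      hcontL (Iio_mem_nhds (by linarith))
    obtain ⟨ε, hε, hball⟩ := Metric.mem_nhds_iff.mp hev
    have hevy : ∀ᶠ t in atTop, y t ∈ Metric.ball L ε :=
      htendy (Metric.ball_mem_nhds L hε)
    obtain ⟨T0, hT0⟩ := eventually_atTop.mp hevy
    set T := max T0 0 with hTdef
    have hTnn : (0:ℝ) ≤ T := le_max_right _ _
    have hTball : ∀ t, T ≤ t → f (y t) < f L / 2 := by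
      intro t ht
      exact hball (hT0 t (le_trans (le_max_left _ _) ht))
    set c : ℝ := -(f L) / 2 with hcdef
    have hcpos : 0 < c := by simp [hcdef]; linarith
    set g : ℝ → ℝ := fun t => y t + c * t with hgdef
    have hganti : AntitoneOn g (Set.Ici T) := by
      apply antitoneOn_of_deriv_nonpos (convex_Ici T)
      · intro s hs
        have : HasDerivAt g (f (y s) + c) s :=
          (hy s (le_trans hTnn hs)).add ((hasDerivAt_id s).const_mul c |>.congr_deriv (by ring))
        exact this.continuousAt.continuousWithinAt
      · intro s hs
        rw [interior_Ici] at hs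
        have : HasDerivAt g (f (y s) + c) s := by
          have h1 : HasDerivAt (fun t : ℝ => c * t) c s := by
            simpa using (hasDerivAt_id s).const_mul c
          exact (hy s (le_trans hTnn hs.le)).add h1
        exact this.differentiableAt.differentiableWithinAt
      · intro s hs
        rw [interior_Ici] at hs
        have h1 : HasDerivAt (fun t : ℝ => c * t) c s := by
          simpa using (hasDerivAt_id s).const_mul c
        have h2 : HasDerivAt g (f (y s) + c) s := (hy s (le_trans hTnn hs.le)).add h1
        rw [h2.deriv]
        have := hTball s hs.le
        simp only [hcdef]
        linarith
    set t2 : ℝ := T + (y T - L) / c + 1 with ht2def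
    have hyTL : L ≤ y T := hLle T hTnn
    have ht2ge : T ≤ t2 := by
      have h9 : 0 ≤ (y T - L) / c := div_nonneg (by linarith) hcpos.le
      rw [ht2def]; linarith
    have hgle : g t2 ≤ g T := hganti (Set.self_mem_Ici) ht2ge ht2ge
    have hyt2 : L ≤ y t2 := hLle t2 (le_trans hTnn ht2ge)
    have hcalc : c * t2 = c * T + (y T - L) + c := by
      field_simp [ht2def]
      rw [ht2def]
      linear_combination div_mul_cancel₀ (y T - L) hcpos.ne'
    simp only [hgdef] at hgle
    nlinarith
  rw [hLa] at htendy
  exact htendy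

theorem competition_bistability
    (a11 a12 a21 a22 : ℝ)
    (h11 : 0 < a11) (h12 : 0 < a12) (h21 : 0 < a21) (h22 : 0 < a22)
    (hcomp1 : a21 < a11) (hcomp2 : a12 < a22) :
    (∀ u ∈ Set.Ioo (0 : ℝ)
        (a21 * (a12 - a22) / (a12 * (a21 - a11) + a21 * (a12 - a22))),
      twoTypeH a11 a12 a21 a22 u < 0) ∧
    (∀ u ∈ Set.Ioo (a21 * (a12 - a22) / (a12 * (a21 - a11) + a21 * (a12 - a22))) (1 : ℝ),
      0 < twoTypeH a11 a12 a21 a22 u) ∧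
    (∀ y : ℝ → ℝ,
      (∀ t, 0 ≤ t → HasDerivAt y (twoTypeH a11 a12 a21 a22 (y t)) t) →
      y 0 ∈ Set.Ioo (0 : ℝ) 1 →
      ((y 0 < a21 * (a12 - a22) / (a12 * (a21 - a11) + a21 * (a12 - a22)) →
          Filter.Tendsto y Filter.atTop (nhds 0)) ∧
       (a21 * (a12 - a22) / (a12 * (a21 - a11) + a21 * (a12 - a22)) < y 0 →
          Filter.Tendsto y Filter.atTop (nhds 1)))) := by
  set N : ℝ := a12 * (a21 - a11) + a21 * (a12 - a22) with hNdef
  set M : ℝ := a21 * (a12 - a22) with hMdef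
  set ust : ℝ := M / N with hustdef
  have hN : N < 0 := by nlinarith
  have hM : M < 0 := by nlinarith
  have hMN : N < M := by nlinarith
  have hust_pos : 0 < ust := by
    rw [hustdef, ← neg_div_neg_eq]
    exact div_pos (by linarith) (by linarith)
  have hust_lt1 : ust < 1 := by
    rw [hustdef, ← neg_div_neg_eq]
    rw [div_lt_one (by linarith)]
    linarith
  -- denominators are positive on [0,1]
  have hD1 : ∀ u : ℝ, 0 ≤ u → u ≤ 1 → 0 < a12 * u + a22 * (1 - u) := by
    intro u hu0 hu1
    rcases hu0.eq_or_lt with h | h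
    · simp [← h]; linarith
    · nlinarith
  have hD2 : ∀ u : ℝ, 0 ≤ u → u ≤ 1 → 0 < a11 * u + a21 * (1 - u) := by
    intro u hu0 hu1
    rcases hu0.eq_or_lt with h | h
    · simp [← h]; linarith
    · nlinarith
  -- sign of h on (0, ust) and (ust, 1)
  have hrw : ∀ u : ℝ, 0 ≤ u → u ≤ 1 →
      twoTypeH a11 a12 a21 a22 u =
        ((M - N * u) / ((a12 * u + a22 * (1 - u)) * (a11 * u + a21 * (1 - u)))) * u * (1 - u) := by
    intro u hu0 hu1
    have h1 := hD1 u hu0 hu1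
    have h2 := hD2 u hu0 hu1
    unfold twoTypeH
    rw [div_sub_div _ _ (ne_of_gt h1) (ne_of_gt h2)]
    congr 2
    congr 1
    simp [hMdef, hNdef]
    ring
  have hsign_neg : ∀ u ∈ Set.Ioo (0:ℝ) ust, twoTypeH a11 a12 a21 a22 u < 0 := by
    intro u hu
    have hu1 : u < 1 := lt_trans hu.2 hust_lt1
    rw [hrw u hu.1.le hu1.le]
    have hnum : M - N * u < 0 := by
      have : u * N > (M / N) * N := by
        have := mul_lt_mul_of_neg_right hu.2 hN
        rw [hustdef] at this
        linarith [this]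
      rw [div_mul_cancel₀ _ (ne_of_lt hN)] at this
      nlinarith
    have hden : 0 < (a12 * u + a22 * (1 - u)) * (a11 * u + a21 * (1 - u)) :=
      mul_pos (hD1 u hu.1.le hu1.le) (hD2 u hu.1.le hu1.le)
    have : (M - N * u) / ((a12 * u + a22 * (1 - u)) * (a11 * u + a21 * (1 - u))) < 0 :=
      div_neg_of_neg_of_pos hnum hden
    have h1u : 0 < 1 - u := by linarith
    exact mul_neg_of_neg_of_pos (mul_neg_of_neg_of_pos this hu.1) h1u
  have hsign_pos : ∀ u ∈ Set.Ioo ust (1:ℝ), 0 < twoTypeH a11 a12 a21 a22 u := by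
    intro u hu
    have hu0 : 0 < u := lt_trans hust_pos hu.1
    rw [hrw u hu0.le hu.2.le]
    have hnum : 0 < M - N * u := by
      have : u * N < (M / N) * N := by
        have := mul_lt_mul_of_neg_right hu.1 hN
        rw [hustdef] at this
        linarith [this]
      rw [div_mul_cancel₀ _ (ne_of_lt hN)] at this
      nlinarith
    have hden : 0 < (a12 * u + a22 * (1 - u)) * (a11 * u + a21 * (1 - u)) :=
      mul_pos (hD1 u hu0.le hu.2.le) (hD2 u hu0.le hu.2.le)
    have h1u : 0 < 1 - u := by linarith [hu.2]
    exact mul_pos (mul_pos (div_pos hnum hden) hu0) h1u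
  -- continuity of h on [0,1]
  have hcont : ContinuousOn (twoTypeH a11 a12 a21 a22) (Set.Icc 0 1) := by
    unfold twoTypeH
    apply ContinuousOn.mul
    apply ContinuousOn.mul
    apply ContinuousOn.sub
    · exact continuousOn_const.div (by fun_prop)
        (fun u hu => ne_of_gt (hD1 u hu.1 hu.2))
    · exact continuousOn_const.div (by fun_prop)
        (fun u hu => ne_of_gt (hD2 u hu.1 hu.2))
    · exact continuousOn_id
    · fun_prop
  refine ⟨hsign_neg, hsign_pos, ?_⟩
  intro y hy hy01
  constructor
  · -- y 0 < ust : converge to 0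
    intro hlt
    apply ode_conv (twoTypeH a11 a12 a21 a22) 0 ust
      (hcont.mono (Set.Icc_subset_Icc le_rfl hust_lt1.le))
      (fun u hu => hsign_neg u hu) ?_ y hy ⟨hy01.1, hlt⟩
    -- linear lower bound near 0
    have hAcont : ContinuousOn (fun u : ℝ =>
        (a12 / (a12 * u + a22 * (1 - u)) - a21 / (a11 * u + a21 * (1 - u))) * (1 - u))
        (Set.Icc 0 1) := by
      apply ContinuousOn.mul
      apply ContinuousOn.sub
      · exact continuousOn_const.div (by fun_prop)
          (fun u hu => ne_of_gt (hD1 u hu.1 hu.2))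
      · exact continuousOn_const.div (by fun_prop)
          (fun u hu => ne_of_gt (hD2 u hu.1 hu.2))
      · fun_prop
    obtain ⟨u0, hu0mem, hu0min⟩ :=
      isCompact_Icc.exists_isMinOn (⟨0, Set.left_mem_Icc.mpr one_pos.le⟩) hAcont
    set m := (a12 / (a12 * u0 + a22 * (1 - u0)) - a21 / (a11 * u0 + a21 * (1 - u0))) * (1 - u0)
    refine ⟨-m, ?_⟩
    intro u hu
    have humem : u ∈ Set.Icc (0:ℝ) 1 :=
      ⟨hu.1, le_trans hu.2 hust_lt1.le⟩
    have hmle : m ≤ (a12 / (a12 * u + a22 * (1 - u)) - a21 / (a11 * u + a21 * (1 - u))) * (1 - u) :=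
      isMinOn_iff.mp hu0min u humem
    have h1 : twoTypeH a11 a12 a21 a22 u =
        ((a12 / (a12 * u + a22 * (1 - u)) - a21 / (a11 * u + a21 * (1 - u))) * (1 - u)) * u := by
      unfold twoTypeH; ring
    rw [h1]
    have := mul_le_mul_of_nonneg_right hmle hu.1
    simp only [sub_zero, neg_mul]
    linarith
  · -- ust < y 0 : converge to 1
    intro hgt
    have hconv : Filter.Tendsto (fun t => 1 - y t) Filter.atTop (nhds 0) := by
      apply ode_conv (fun u => - twoTypeH a11 a12 a21 a22 (1 - u)) 0 (1 - ust)
      · apply ContinuousOn.neg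
        apply hcont.comp (by fun_prop)
        intro u hu
        exact ⟨by linarith [hu.2], by linarith [hu.1]⟩
      · intro u hu
        have : (1 - u) ∈ Set.Ioo ust (1:ℝ) := ⟨by linarith [hu.2], by linarith [hu.1]⟩
        linarith [hsign_pos _ this]
      · -- linear lower bound near 0
        have hBcont : ContinuousOn (fun u : ℝ =>
            -((a12 / (a12 * (1-u) + a22 * u) - a21 / (a11 * (1-u) + a21 * u)) * (1 - u)))
            (Set.Icc 0 1) := by
          apply ContinuousOn.neg
          apply ContinuousOn.mul
          apply ContinuousOn.sub
          · apply continuousOn_const.div (by fun_prop)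
            intro u hu
            have := hD1 (1-u) (by linarith [hu.2]) (by linarith [hu.1])
            intro hz
            rw [show a12 * (1-u) + a22 * u = a12 * (1 - u) + a22 * (1 - (1 - u)) by ring] at hz
            linarith
          · apply continuousOn_const.div (by fun_prop)
            intro u hu
            have := hD2 (1-u) (by linarith [hu.2]) (by linarith [hu.1])
            intro hz
            rw [show a11 * (1-u) + a21 * u = a11 * (1 - u) + a21 * (1 - (1 - u)) by ring] at hz
            linarith
          · fun_prop
        obtain ⟨u0, hu0mem, hu0min⟩ :=
          isCompact_Icc.exists_isMinOn (⟨0, Set.left_mem_Icc.mpr one_pos.le⟩) hBcont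
        set m := -((a12 / (a12 * (1-u0) + a22 * u0) - a21 / (a11 * (1-u0) + a21 * u0)) * (1 - u0))
        refine ⟨-m, ?_⟩
        intro u hu
        have humem : u ∈ Set.Icc (0:ℝ) 1 :=
          ⟨hu.1, by linarith [hu.2, hust_pos]⟩
        have hmle : m ≤ -((a12 / (a12 * (1-u) + a22 * u) - a21 / (a11 * (1-u) + a21 * u)) * (1 - u)) :=
          isMinOn_iff.mp hu0min u humem
        have h1 : - twoTypeH a11 a12 a21 a22 (1 - u) =
            (-((a12 / (a12 * (1-u) + a22 * u) - a21 / (a11 * (1-u) + a21 * u)) * (1 - u))) * u := by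
          unfold twoTypeH
          rw [show a12 * (1 - u) + a22 * (1 - (1 - u)) = a12 * (1-u) + a22 * u by ring,
            show a11 * (1 - u) + a21 * (1 - (1 - u)) = a11 * (1-u) + a21 * u by ring]
          ring
        rw [h1]
        have := mul_le_mul_of_nonneg_right hmle hu.1
        simp only [sub_zero, neg_mul]
        linarith
      · intro t ht
        have := (hy t ht).const_sub 1
        simpa only [sub_sub_cancel] using this
      · exact ⟨by linarith [hy01.2], by linarith⟩
    have := Filter.Tendsto.const_sub (1:ℝ) hconv
    simpa using this
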